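/- (Reverse Jensen inequality) Let X be a discrete log-concave random variable supported on ℕ. Then for all real numbers 1 ≤ r ≤ s, E[X^s]^{1/s} ≤ 5·s·(s·e)^{1/s}·(E[X^r]^{1/r} + 1)/2. In particular, if E[X] ≥ 1, then E[X^s]^{1/s} ≤ 5·s·(s·e)^{1/s}·E[X^r]^{1/r}. -/

import Mathlib

/-- The support of `f : ℤ → ℝ` is contiguous. -/
def ContigSupportInt (f : ℤ → ℝ) : Prop :=
  ∀ a b c : ℤ, a ≤ b → b ≤ c → 0 < f a → 0 < f c → 0 < f b

/-- `p` is the p.m.f. of a log-concave probability measure on `ℤ`. -/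
def IsLogConcavePMF (p : ℤ → ℝ) : Prop :=
  (∀ n, 0 ≤ p n) ∧ Summable p ∧ (∑' n : ℤ, p n) = 1 ∧
    (∀ n : ℤ, p (n - 1) * p (n + 1) ≤ p n ^ 2) ∧ ContigSupportInt p

/-- `S ⊆ ℤ` is an interval. -/
def IsIntervalZ (S : Set ℤ) : Prop :=
  ∀ a b c : ℤ, a ≤ b → b ≤ c → a ∈ S → c ∈ S → b ∈ S

/-- The measure of a set `S ⊆ ℤ` under the p.m.f. `p`. -/
noncomputable def measOf (p : ℤ → ℝ) (S : Set ℤ) : ℝ :=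
  ∑' n : ℤ, S.indicator p n

namespace RevJensenAux
open Finset

/-- `y^a ≤ (a/e)^a * exp y` for `y > 0`, `a ≥ 0`. -/
lemma rpow_le_exp_aux {y a : ℝ} (hy : 0 < y) (ha : 0 ≤ a) :
    y ^ a ≤ (a / Real.exp 1) ^ a * Real.exp y := by
  rcases ha.eq_or_lt with h | h
  · subst h
    simp [Real.rpow_zero]
    linarith [Real.add_one_le_exp y]
  · have hae : 0 < a / Real.exp 1 := div_pos h (Real.exp_pos 1)
    rw [Real.rpow_def_of_pos hy, Real.rpow_def_of_pos hae, ← Real.exp_add]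
    rw [Real.exp_le_exp]
    have hlog : Real.log (y / a) ≤ y / a - 1 :=
      Real.log_le_sub_one_of_pos (div_pos hy h)
    have hlog2 : Real.log (y / a) = Real.log y - Real.log a :=
      Real.log_div (ne_of_gt hy) (ne_of_gt h)
    have hlog3 : Real.log (a / Real.exp 1) = Real.log a - 1 := by
      rw [Real.log_div (ne_of_gt h) (ne_of_gt (Real.exp_pos 1)), Real.log_exp]
    have h4 : a * Real.log (y/a) ≤ a * (y/a - 1) :=
      mul_le_mul_of_nonneg_left hlog ha
    have h5 : a * (y/a - 1) = y - a := by field_simp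
    rw [hlog3]
    nlinarith [h4, hlog2]

/-- Bernoulli-type: `b^u - (b-1)^u ≤ u * b^(u-1)` for `b ≥ 1 ≤ u`. -/
lemma rpow_sub_rpow_le {b u : ℝ} (hb : 1 ≤ b) (hu : 1 ≤ u) :
    b ^ u - (b - 1) ^ u ≤ u * b ^ (u - 1) := by
  have hb0 : 0 < b := lt_of_lt_of_le one_pos hb
  have hber := one_add_mul_self_le_rpow_one_add (s := -(1/b)) (by
      have : 1/b ≤ 1 := by
        rw [div_le_one hb0]; exact hb
      linarith) hu
  have h1 : (1 + -(1/b)) = (b-1)/b := by field_simp; ring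
  rw [h1] at hber
  have h2 : ((b-1)/b : ℝ) ^ u = (b-1)^u / b^u :=
    Real.div_rpow (by linarith : (0:ℝ) ≤ b - 1) (le_of_lt hb0) u
  rw [h2] at hber
  have hbu : (0:ℝ) < b ^ u := Real.rpow_pos_of_pos hb0 u
  have h3 : (1 + u * -(1/b)) * b ^ u ≤ (b-1)^u := (le_div_iff₀ hbu).mp hber
  have h4 : b ^ (u-1) = b ^ u / b := by
    rw [Real.rpow_sub hb0, Real.rpow_one]
  have h5 : (1 + u * -(1/b)) * b ^ u = b ^ u - u * (b ^ u / b) := by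
    field_simp; ring
  rw [h5] at h3
  rw [h4]
  linarith

/-- partial geometric sums: `∑_{j<J} ρ^(j+1) ≤ ρ/(1-ρ)`. -/
lemma geom_partial {ρ : ℝ} (h0 : 0 ≤ ρ) (h1 : ρ < 1) (J : ℕ) :
    ∑ j ∈ range J, ρ ^ (j+1) ≤ ρ / (1 - ρ) := by
  have hne : ρ ≠ 1 := ne_of_lt h1
  have hgs : ∑ j ∈ range J, ρ ^ j = (1 - ρ ^ J)/(1 - ρ) := by
    rw [geom_sum_eq hne J, ← neg_sub (1:ℝ) (ρ^J), ← neg_sub (1:ℝ) ρ, neg_div_neg_eq]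
  have h2 : ∑ j ∈ range J, ρ ^ (j+1) = ρ * ∑ j ∈ range J, ρ ^ j := by
    rw [Finset.mul_sum]
    exact Finset.sum_congr rfl (fun j _ => by ring)
  rw [h2, hgs]
  have h3 : (1 - ρ ^ J)/(1-ρ) ≤ 1/(1-ρ) := by
    gcongr
    · have : 0 ≤ ρ ^ J := pow_nonneg h0 J
      linarith
  calc ρ * ((1 - ρ ^ J)/(1-ρ)) ≤ ρ * (1/(1-ρ)) := mul_le_mul_of_nonneg_left h3 h0
    _ = ρ/(1-ρ) := by ring

/-- The tail bound skeleton. -/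
lemma tail_bound {u q A ρ : ℝ} (hu : 1 ≤ u) (hq : 0 ≤ q)
    (hρ0 : 0 ≤ ρ) (hρ1 : ρ < 1) (hA : 0 ≤ A)
    (hterm : ∀ i : ℕ, u * ((i:ℝ)+2) ^ (u-1) * q ^ (i+1) ≤ A * ρ ^ (i+1)) :
    ∀ J : ℕ, ∑ j ∈ range J, (((j:ℝ)+1) ^ u - (j:ℝ) ^ u) * q ^ j
      ≤ 1 + A * (ρ / (1 - ρ)) := by
  intro J
  have hrat : 0 ≤ ρ / (1-ρ) := div_nonneg hρ0 (by linarith)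
  cases J with
  | zero => simp; positivity
  | succ J' =>
    rw [Finset.sum_range_succ']
    have h0term : ((((0:ℕ):ℝ)+1) ^ u - ((0:ℕ):ℝ) ^ u) * q ^ 0 = 1 := by
      norm_num
      exact Real.zero_rpow (by linarith)
    rw [h0term]
    have hrest : ∑ i ∈ range J', ((((i+1:ℕ):ℝ)+1) ^ u - ((i+1:ℕ):ℝ) ^ u) * q ^ (i+1)
        ≤ A * (ρ/(1-ρ)) := by
      have hstep : ∀ i ∈ range J',
          ((((i+1:ℕ):ℝ)+1) ^ u - ((i+1:ℕ):ℝ) ^ u) * q ^ (i+1) ≤ A * ρ ^ (i+1) := by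
        intro i _
        have hcast : (((i+1:ℕ):ℝ)) = (i:ℝ) + 1 := by push_cast; ring
        rw [hcast]
        have hb : (1:ℝ) ≤ (i:ℝ) + 2 := by have := Nat.cast_nonneg (α := ℝ) i; linarith
        have hbern := rpow_sub_rpow_le (b := (i:ℝ)+2) hb hu
        have hq' : (0:ℝ) ≤ q ^ (i+1) := pow_nonneg hq _
        have h6 : ((i:ℝ)+2) ^ u - ((i:ℝ)+1) ^ u ≤ u * ((i:ℝ)+2) ^ (u-1) := by
          have : ((i:ℝ)+2) - 1 = (i:ℝ)+1 := by ring
          rw [← this]; exact hbern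
        calc (((i:ℝ) + 1 + 1) ^ u - ((i:ℝ)+1) ^ u) * q ^ (i+1)
            ≤ (u * ((i:ℝ)+2) ^ (u-1)) * q ^ (i+1) := by
              apply mul_le_mul_of_nonneg_right ?_ hq'
              have : (i:ℝ) + 1 + 1 = (i:ℝ) + 2 := by ring
              rw [this]; exact h6
          _ ≤ A * ρ ^ (i+1) := hterm i
      calc ∑ i ∈ range J', ((((i+1:ℕ):ℝ)+1) ^ u - ((i+1:ℕ):ℝ) ^ u) * q ^ (i+1)
          ≤ ∑ i ∈ range J', A * ρ ^ (i+1) := Finset.sum_le_sum hstep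
        _ = A * ∑ i ∈ range J', ρ ^ (i+1) := by rw [Finset.mul_sum]
        _ ≤ A * (ρ/(1-ρ)) := mul_le_mul_of_nonneg_left (geom_partial hρ0 hρ1 J') hA
    linarith

lemma le_rpow_inv_of_pow_le {x c : ℝ} {n : ℕ} (hn : n ≠ 0) (hc : 0 ≤ c) (hx : 0 ≤ x)
    (h : c ^ n ≤ x) : c ≤ x ^ ((n:ℝ)⁻¹) := by
  have h1 : c = (c ^ ((n:ℕ):ℝ)) ^ (((n:ℕ):ℝ))⁻¹ :=
    (Real.rpow_rpow_inv hc (by exact_mod_cast hn)).symm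
  rw [h1, Real.rpow_natCast]
  exact Real.rpow_le_rpow (pow_nonneg hc n) h (by positivity)

lemma exp_fifth_le : Real.exp (1/5) ≤ 1.2215 := by
  have h5 : Real.exp (1/5) ^ (5:ℕ) = Real.exp 1 := by
    rw [← Real.exp_nat_mul]; norm_num
  have h := Real.exp_one_lt_d9
  apply le_of_pow_le_pow_left₀ (n := 5) (by norm_num) (by norm_num)
  rw [h5]; nlinarith [h]

lemma exp_three_fifth_le : Real.exp (3/5) ≤ 1.8222 := by
  have h5 : Real.exp (3/5) ^ (5:ℕ) = (Real.exp 1)^(3:ℕ) := by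
    rw [← Real.exp_nat_mul, ← Real.exp_nat_mul]; norm_num
  have h := Real.exp_one_lt_d9
  have he0 := Real.exp_pos 1
  apply le_of_pow_le_pow_left₀ (n := 5) (by norm_num) (by norm_num)
  rw [h5]
  calc Real.exp 1 ^ 3 ≤ 2.7182818286 ^ 3 := pow_le_pow_left₀ (le_of_lt he0) (le_of_lt h) 3
    _ ≤ 1.8222 ^ 5 := by norm_num

lemma exp_half_le : Real.exp (1/2) ≤ 1.6489 := by
  have h2 : Real.exp (1/2) ^ (2:ℕ) = Real.exp 1 := by
    rw [← Real.exp_nat_mul]; norm_num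
  have h := Real.exp_one_lt_d9
  apply le_of_pow_le_pow_left₀ (n := 2) (by norm_num) (by norm_num)
  rw [h2]; nlinarith [h]

/-- core exp-domination for small exponent: `(i+2)^v ≤ exp(c)^(i+1)` when `0 ≤ v ≤ c`. -/
lemma rpow_le_exp_pow {v c : ℝ} (hv : 0 ≤ v) (hvc : v ≤ c) (i : ℕ) :
    ((i:ℝ)+2) ^ v ≤ Real.exp c ^ (i+1) := by
  have hpos : (0:ℝ) < (i:ℝ)+2 := by positivity
  have hlog : Real.log ((i:ℝ)+2) ≤ (i:ℝ)+1 := by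
    have := Real.log_le_sub_one_of_pos hpos
    linarith
  have h1 : ((i:ℝ)+2) ^ v = Real.exp (Real.log ((i:ℝ)+2) * v) := Real.rpow_def_of_pos hpos v
  rw [h1]
  have h3 : Real.log ((i:ℝ)+2) * v ≤ ((i:ℝ)+1) * c := by
    have hln : 0 ≤ Real.log ((i:ℝ)+2) := Real.log_nonneg (by linarith)
    calc Real.log ((i:ℝ)+2) * v ≤ Real.log ((i:ℝ)+2) * c := mul_le_mul_of_nonneg_left hvc hln
      _ ≤ ((i:ℝ)+1) * c := mul_le_mul_of_nonneg_right hlog (le_trans hv hvc)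
  calc Real.exp (Real.log ((i:ℝ)+2) * v) ≤ Real.exp (((i:ℝ)+1) * c) := by
        exact Real.exp_le_exp.mpr h3
    _ = Real.exp c ^ (i+1) := by
        rw [← Real.exp_nat_mul]
        norm_num
  
set_option maxHeartbeats 1000000 in
/-- Main analytic tail estimate at `q = 1/3`. -/
lemma sharp_tail {s : ℝ} (hs : 1 ≤ s) (J : ℕ) :
    ∑ j ∈ range J, (((j:ℝ)+1) ^ s - (j:ℝ) ^ s) * (1/3:ℝ) ^ j
      ≤ (5*s/6) ^ s * (s * Real.exp 1) := by
  have hE2 := Real.exp_one_gt_d9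
  have hE1 := Real.exp_one_lt_d9
  have hs0 : 0 < s := by linarith
  rcases le_total s (6/5 : ℝ) with hA1 | hs1
  · -- case A1 : 1 ≤ s ≤ 6/5
    have hρ1 : Real.exp (1/5)/3 ≤ 0.40717 := by
      have := exp_fifth_le; linarith
    have hρ0 : 0 ≤ Real.exp (1/5)/3 := by positivity
    have htb := tail_bound (u := s) (q := 1/3) (A := s) (ρ := Real.exp (1/5)/3)
      hs (by norm_num) hρ0 (by linarith) (le_of_lt hs0) ?hterm J
    case hterm =>
      intro i
      have hcore : ((i:ℝ)+2) ^ (s-1) ≤ Real.exp (1/5) ^ (i+1) :=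
        rpow_le_exp_pow (by linarith) (by linarith) i
      have hq' : (0:ℝ) ≤ (1/3:ℝ)^(i+1) := by positivity
      calc s * ((i:ℝ)+2) ^ (s-1) * (1/3)^(i+1)
          ≤ s * (Real.exp (1/5) ^ (i+1)) * (1/3)^(i+1) := by
            apply mul_le_mul_of_nonneg_right (mul_le_mul_of_nonneg_left hcore (le_of_lt hs0)) hq'
        _ = s * (Real.exp (1/5)/3) ^ (i+1) := by
            rw [div_pow]; ring_nf; simp only [one_div]
    -- now 1 + s * (ρ/(1-ρ)) ≤ RHS
    refine le_trans htb ?_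
    have hrat : Real.exp (1/5)/3 / (1 - Real.exp (1/5)/3) ≤ 0.687 := by
      rw [div_le_iff₀ (by linarith)]
      linarith
    have hbase : (0.803:ℝ) ≤ (5*s/6) ^ s := by
      have hb1 : (5*s/6 : ℝ) ≤ 1 := by linarith
      have hb0 : (0:ℝ) < 5*s/6 := by linarith
      have hstep1 : (5*s/6) ^ ((6:ℝ)/5) ≤ (5*s/6) ^ s :=
        Real.rpow_le_rpow_of_exponent_ge hb0 hb1 hA1
      have hstep2 : ((5:ℝ)/6) ^ ((6:ℝ)/5) ≤ (5*s/6) ^ ((6:ℝ)/5) :=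
        Real.rpow_le_rpow (by norm_num) (by linarith) (by norm_num)
      have hstep3 : (0.803:ℝ) ≤ ((5:ℝ)/6) ^ ((6:ℝ)/5) := by
        have h65 : ((6:ℝ)/5) = ((6:ℕ):ℝ) * ((5:ℕ):ℝ)⁻¹ := by norm_num
        rw [h65, Real.rpow_mul (by norm_num), Real.rpow_natCast]
        apply le_rpow_inv_of_pow_le (by norm_num) (by norm_num) (by positivity)
        norm_num
      linarith
    have hre : 0 ≤ s * Real.exp 1 := by positivity
    have h1 : 1 + s * (Real.exp (1/5)/3 / (1 - Real.exp (1/5)/3)) ≤ 1 + 0.687 * s := by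
      have := mul_le_mul_of_nonneg_left hrat (le_of_lt hs0)
      linarith
    have h2 : (0.803:ℝ) * (s * Real.exp 1) ≤ (5*s/6)^s * (s * Real.exp 1) :=
      mul_le_mul_of_nonneg_right hbase hre
    nlinarith [h1, h2, hs0, mul_le_mul_of_nonneg_left hE2.le hs0.le]
  · rcases le_total s (8/5 : ℝ) with hA2 | hsB
    · -- case A2 : 6/5 ≤ s ≤ 8/5
      have hρ1 : Real.exp (3/5)/3 ≤ 0.6074 := by
        have := exp_three_fifth_le; linarith
      have hρ0 : 0 ≤ Real.exp (3/5)/3 := by positivity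
      have htb := tail_bound (u := s) (q := 1/3) (A := s) (ρ := Real.exp (3/5)/3)
        hs (by norm_num) hρ0 (by linarith) (le_of_lt hs0) ?hterm J
      case hterm =>
        intro i
        have hcore : ((i:ℝ)+2) ^ (s-1) ≤ Real.exp (3/5) ^ (i+1) :=
          rpow_le_exp_pow (by linarith) (by linarith) i
        have hq' : (0:ℝ) ≤ (1/3:ℝ)^(i+1) := by positivity
        calc s * ((i:ℝ)+2) ^ (s-1) * (1/3)^(i+1)
            ≤ s * (Real.exp (3/5) ^ (i+1)) * (1/3)^(i+1) := by
              apply mul_le_mul_of_nonneg_right (mul_le_mul_of_nonneg_left hcore (le_of_lt hs0)) hq'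
          _ = s * (Real.exp (3/5)/3) ^ (i+1) := by
              rw [div_pow]; ring_nf; simp only [one_div]
      refine le_trans htb ?_
      have hrat : Real.exp (3/5)/3 / (1 - Real.exp (3/5)/3) ≤ 1.548 := by
        rw [div_le_iff₀ (by linarith)]
        linarith
      have hbase : (1:ℝ) ≤ (5*s/6) ^ s :=
        Real.one_le_rpow (by linarith) (le_of_lt hs0)
      have h1 : 1 + s * (Real.exp (3/5)/3 / (1 - Real.exp (3/5)/3)) ≤ 1 + 1.548 * s := by
        have := mul_le_mul_of_nonneg_left hrat (le_of_lt hs0)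
        linarith
      have hre : 0 ≤ s * Real.exp 1 := by positivity
      have h2 : (1:ℝ) * (s * Real.exp 1) ≤ (5*s/6)^s * (s * Real.exp 1) :=
        mul_le_mul_of_nonneg_right hbase hre
      nlinarith [h1, h2, hs0, mul_le_mul_of_nonneg_left hE2.le hs0.le]
    · -- case B : s ≥ 8/5
      set u' := s - 1 with hu'
      have hu'0 : (3/5:ℝ) ≤ u' := by simp [hu']; linarith
      have hexph := exp_half_le
      have hexp0 : (0:ℝ) < Real.exp (1/2) := Real.exp_pos _
      set C := (2*u'/Real.exp 1) ^ u' with hC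
      have hC0 : 0 ≤ C := Real.rpow_nonneg (by positivity) _
      have hρ0 : (0:ℝ) ≤ Real.exp (1/2)/3 := by positivity
      have hρ1 : Real.exp (1/2)/3 ≤ 0.54964 := by linarith
      have htb := tail_bound (u := s) (q := 1/3)
        (A := s * C * Real.exp (1/2)) (ρ := Real.exp (1/2)/3)
        hs (by norm_num) hρ0 (by linarith) (by positivity) ?hterm J
      case hterm =>
        intro i
        have hy : (0:ℝ) < ((i:ℝ)+2)/2 := by positivity
        have haux := rpow_le_exp_aux hy (by linarith : (0:ℝ) ≤ u')
        -- (i+2)^u' = 2^u' * ((i+2)/2)^u'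
        have hsplit : ((i:ℝ)+2) ^ u' = (2:ℝ)^u' * (((i:ℝ)+2)/2) ^ u' := by
          rw [← Real.mul_rpow (by norm_num) (le_of_lt hy)]
          congr 1; ring
        have hmul2 : (2:ℝ)^u' * (u'/Real.exp 1) ^ u' = (2*u'/Real.exp 1) ^ u' := by
          rw [← Real.mul_rpow (by norm_num) (by positivity)]
          ring_nf
        have hexpsplit : Real.exp (((i:ℝ)+2)/2) = Real.exp (1/2) * Real.exp (1/2)^(i+1) := by
          rw [← pow_succ']
          rw [← Real.exp_nat_mul]
          push_cast
          ring_nf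
        have hcore : ((i:ℝ)+2) ^ u' ≤ C * (Real.exp (1/2) * Real.exp (1/2)^(i+1)) := by
          rw [hsplit, hC, ← hexpsplit, ← hmul2]
          calc (2:ℝ)^u' * (((i:ℝ)+2)/2) ^ u'
              ≤ (2:ℝ)^u' * ((u'/Real.exp 1) ^ u' * Real.exp (((i:ℝ)+2)/2)) := by
                apply mul_le_mul_of_nonneg_left haux (Real.rpow_nonneg (by norm_num) _)
            _ = (2:ℝ)^u' * (u'/Real.exp 1) ^ u' * Real.exp (((i:ℝ)+2)/2) := by ring
        have hq' : (0:ℝ) ≤ (1/3:ℝ)^(i+1) := by positivity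
        calc s * ((i:ℝ)+2) ^ (s-1) * (1/3)^(i+1)
            ≤ s * (C * (Real.exp (1/2) * Real.exp (1/2)^(i+1))) * (1/3)^(i+1) := by
              apply mul_le_mul_of_nonneg_right (mul_le_mul_of_nonneg_left hcore (le_of_lt hs0)) hq'
          _ = s * C * Real.exp (1/2) * (Real.exp (1/2)/3) ^ (i+1) := by
              rw [div_pow]; ring_nf; simp only [one_div]
      refine le_trans htb ?_
      -- final numeric assembly for case B
      set X := ((3/4:ℝ)*s) ^ s with hX
      have hbase1 : (1:ℝ) ≤ (3/4:ℝ)*s := by linarith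
      have hX1 : (1:ℝ) ≤ X := Real.one_le_rpow hbase1 (le_of_lt hs0)
      have hCle : C ≤ X / ((3/4)*s) := by
        have c1 : 2*u'/Real.exp 1 ≤ (3/4)*u' := by
          rw [div_le_iff₀ (Real.exp_pos 1)]
          nlinarith [hE2, hu'0]
        have c2 : (2*u'/Real.exp 1) ^ u' ≤ ((3/4)*s) ^ u' := by
          apply Real.rpow_le_rpow (by positivity) (by nlinarith [hu'0]) (by linarith)
        have c3 : ((3/4:ℝ)*s) ^ u' = X / ((3/4)*s) := by
          rw [hX, hu']
          rw [Real.rpow_sub (by linarith), Real.rpow_one]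
        rw [hC]; rw [← c3]; exact c2
      have hrat : Real.exp (1/2)/3 / (1 - Real.exp (1/2)/3) ≤ 1.2206 := by
        rw [div_le_iff₀ (by linarith)]
        linarith
      -- A * rat ≤ 2.684 * X
      have hApos : 0 ≤ s * C := by positivity
      have hAr : s * C * Real.exp (1/2) * (Real.exp (1/2)/3 / (1 - Real.exp (1/2)/3))
          ≤ 2.684 * X := by
        have e1 : s * C ≤ (4/3) * X := by
          have := mul_le_mul_of_nonneg_left hCle (le_of_lt hs0)
          calc s * C ≤ s * (X / ((3/4)*s)) := this
            _ = (4/3) * X := by field_simp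
        have e2 : 0 ≤ Real.exp (1/2) * (Real.exp (1/2)/3 / (1 - Real.exp (1/2)/3)) := by
          apply mul_nonneg (le_of_lt hexp0)
          apply div_nonneg hρ0 (by linarith)
        have e3 : Real.exp (1/2) * (Real.exp (1/2)/3 / (1 - Real.exp (1/2)/3))
            ≤ 1.6489 * 1.2206 := by
          apply mul_le_mul hexph hrat (div_nonneg hρ0 (by linarith)) (by norm_num)
        have e4 : 0 ≤ X := by linarith
        calc s * C * Real.exp (1/2) * (Real.exp (1/2)/3 / (1 - Real.exp (1/2)/3))
            = (s * C) * (Real.exp (1/2) * (Real.exp (1/2)/3 / (1 - Real.exp (1/2)/3))) := by ring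
          _ ≤ ((4/3) * X) * (1.6489 * 1.2206) := by
              apply mul_le_mul e1 e3 e2 (by positivity)
          _ ≤ 2.684 * X := by nlinarith [e4]
      -- RHS ≥ (10/9) * X * s * e
      have hrhs : (10/9:ℝ) * X * (s * Real.exp 1) ≤ (5*s/6)^s * (s * Real.exp 1) := by
        have r1 : ((5:ℝ)*s/6) ^ s = (10/9:ℝ)^s * X := by
          have hb : (5*s/6 : ℝ) = (10/9) * ((3/4)*s) := by ring
          rw [hb, Real.mul_rpow (by norm_num) (by linarith), hX]
        have r2 : (10/9:ℝ) ≤ (10/9:ℝ)^s := by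
          calc (10/9:ℝ) = (10/9:ℝ)^(1:ℝ) := (Real.rpow_one _).symm
            _ ≤ (10/9:ℝ)^s := Real.rpow_le_rpow_of_exponent_le (by norm_num) hs
        rw [r1]
        apply mul_le_mul_of_nonneg_right ?_ (by positivity)
        apply mul_le_mul_of_nonneg_right r2 (by linarith)
      have hse : (8/5:ℝ)*2.7182818283 ≤ s * Real.exp 1 := by
        nlinarith [hE2, hsB, Real.exp_pos 1]
      have hXe : (10/9:ℝ) * (8/5) * 2.7182818283 * X ≤ (10/9) * X * (s * Real.exp 1) := by
        nlinarith [hse, hX1]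
      nlinarith [hAr, hrhs, hXe, hX1]

structure Hyp (p : ℤ → ℝ) : Prop where
  nn : ∀ n, 0 ≤ p n
  sum : Summable p
  tot : (∑' n : ℤ, p n) = 1
  lc : ∀ n : ℤ, p (n - 1) * p (n + 1) ≤ p n ^ 2
  con : ∀ a b c : ℤ, a ≤ b → b ≤ c → 0 < p a → 0 < p c → 0 < p b
  neg : ∀ n : ℤ, n < 0 → p n = 0

noncomputable def Qf (p : ℤ → ℝ) (m : ℕ) : ℝ := ∑' n : ℕ, p ((m : ℤ) + n)

variable {p : ℤ → ℝ}

lemma Hyp.sumshift (h : Hyp p) (m : ℕ) : Summable (fun n : ℕ => p ((m:ℤ) + n)) := by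
  have : (fun n : ℕ => p ((m:ℤ) + n)) = p ∘ (fun n : ℕ => (m:ℤ) + n) := rfl
  rw [this]
  exact h.sum.comp_injective (fun a b hab => by omega)

lemma Qf_nonneg (h : Hyp p) (m : ℕ) : 0 ≤ Qf p m :=
  tsum_nonneg (fun n => h.nn _)

lemma Qf_succ (h : Hyp p) (m : ℕ) : Qf p m = p m + Qf p (m+1) := by
  rw [Qf, Summable.tsum_eq_zero_add (h.sumshift m)]
  have e2 : ∑' (b : ℕ), p ((m:ℤ) + ((b+1:ℕ):ℤ)) = Qf p (m+1) := by
    rw [Qf]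
    apply tsum_congr
    intro n
    congr 1
    push_cast
    ring
  rw [e2]
  norm_num

lemma Qf_anti (h : Hyp p) : Antitone (Qf p) := by
  apply antitone_nat_of_succ_le
  intro m
  rw [Qf_succ h m]
  linarith [h.nn (m:ℤ)]

lemma Qf_zero (h : Hyp p) : Qf p 0 = 1 := by
  rw [Qf]
  simp only [Nat.cast_zero, zero_add]
  rw [← h.tot]
  apply Function.Injective.tsum_eq (fun a b hab => by exact_mod_cast hab)
  intro z hz
  rcases le_or_gt 0 z with hz0 | hz0
  · exact ⟨z.toNat, by simp [Int.toNat_of_nonneg hz0]⟩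
  · exact absurd (h.neg z hz0) hz

lemma sum_finset_le_Qf (h : Hyp p) (a : ℕ) (F : Finset ℕ) (hF : ∀ n ∈ F, a ≤ n) :
    ∑ n ∈ F, p n ≤ Qf p a := by
  have hinj : Set.InjOn (fun n => n - a) F := by
    intro x hx y hy hxy
    have hax := hF x hx; have hay := hF y hy
    simp only at hxy; omega
  have he : ∑ m ∈ F.image (fun n => n - a), p ((a:ℤ) + m) = ∑ n ∈ F, p n := by
    rw [Finset.sum_image (fun x hx y hy => hinj hx hy)]
    apply Finset.sum_congr rfl
    intro n hn
    congr 1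
    have := hF n hn
    push_cast
    omega
  rw [← he, Qf]
  exact Summable.sum_le_tsum _ (fun i _ => h.nn _) (h.sumshift a)

lemma chainP (h : Hyp p) : ∀ (k : ℕ) (n : ℤ),
    p n * p (n + (k:ℤ) + 1) ≤ p (n + 1) * p (n + (k:ℤ)) := by
  intro k
  induction k with
  | zero =>
    intro n
    norm_num [mul_comm]
  | succ k ih =>
    intro n
    have hk : (0:ℤ) ≤ (k:ℤ) := Int.natCast_nonneg k
    push_cast
    have hA : p n * p (n+2) ≤ p (n+1)^2 := by
      have := h.lc (n+1)
      have e : n + 1 - 1 = n := by ring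
      rw [e] at this
      have e2 : n + 1 + 1 = n + 2 := by ring
      rw [e2] at this
      exact this
    have hB := ih (n+1)
    have e1 : n + 1 + k + 1 = n + k + 2 := by ring
    have e2 : n + 1 + 1 = n + 2 := by ring
    have e3 : n + 1 + k = n + k + 1 := by ring
    rw [e1, e2, e3] at hB
    have e4 : n + ((k:ℤ)+1) + 1 = n + (k:ℤ) + 2 := by ring
    have e5 : n + ((k:ℤ)+1) = n + (k:ℤ) + 1 := by ring
    rw [e4, e5]
    by_cases hz1 : p (n+1) = 0
    · have hL : p n * p (n+k+2) = 0 := by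
        by_contra hne
        have h1 : p n ≠ 0 ∧ p (n+k+2) ≠ 0 := by
          constructor <;> (intro hzz; apply hne; simp [hzz])
        have hp1 : 0 < p n := lt_of_le_of_ne (h.nn n) (Ne.symm h1.1)
        have hp2 : 0 < p (n+k+2) := lt_of_le_of_ne (h.nn _) (Ne.symm h1.2)
        have := h.con n (n+1) (n+k+2) (by linarith) (by linarith) hp1 hp2
        rw [hz1] at this; exact lt_irrefl 0 this
      rw [hL, hz1, zero_mul]
    · by_cases hz2 : p (n+2) = 0
      · have hL : p n * p (n+k+2) = 0 := by
          by_contra hne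
          have h1 : p n ≠ 0 ∧ p (n+k+2) ≠ 0 := by
            constructor <;> (intro hzz; apply hne; simp [hzz])
          have hp1 : 0 < p n := lt_of_le_of_ne (h.nn n) (Ne.symm h1.1)
          have hp2 : 0 < p (n+k+2) := lt_of_le_of_ne (h.nn _) (Ne.symm h1.2)
          have := h.con n (n+2) (n+k+2) (by linarith) (by linarith) hp1 hp2
          rw [hz2] at this; exact lt_irrefl 0 this
        rw [hL]
        exact mul_nonneg (h.nn _) (h.nn _)
      · have pos1 : 0 < p (n+1) := lt_of_le_of_ne (h.nn _) (Ne.symm hz1)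
        have pos2 : 0 < p (n+2) := lt_of_le_of_ne (h.nn _) (Ne.symm hz2)
        have f1 : p n * p (n+2) * p (n+k+2) ≤ p (n+1)^2 * p (n+k+2) :=
          mul_le_mul_of_nonneg_right hA (h.nn _)
        have f2 : p (n+1) * (p (n+1) * p (n+k+2)) ≤ p (n+1) * (p (n+2) * p (n+k+1)) :=
          mul_le_mul_of_nonneg_left hB pos1.le
        have f3 : p n * p (n+k+2) * p (n+2) ≤ p (n+1) * p (n+k+1) * p (n+2) := by
          nlinarith [f1, f2]
        exact le_of_mul_le_mul_right f3 pos2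

lemma hazard (h : Hyp p) (m : ℕ) :
    p (m:ℤ) * Qf p (m+2) ≤ p ((m:ℤ)+1) * Qf p (m+1) := by
  rw [Qf, Qf, ← tsum_mul_left, ← tsum_mul_left]
  apply Summable.tsum_le_tsum ?_ ((h.sumshift (m+2)).mul_left _) ((h.sumshift (m+1)).mul_left _)
  intro n
  have hc := chainP h (n+1) (m:ℤ)
  have e1 : (m:ℤ) + ((n+1:ℕ):ℤ) + 1 = ((m+2:ℕ):ℤ) + n := by push_cast; ring
  have e2 : (m:ℤ) + ((n+1:ℕ):ℤ) = ((m+1:ℕ):ℤ) + n := by push_cast; ring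
  rw [e1, e2] at hc
  exact hc

lemma Qf_lc (h : Hyp p) (m : ℕ) : Qf p m * Qf p (m+2) ≤ Qf p (m+1)^2 := by
  have e0 : Qf p m = p (m:ℤ) + Qf p (m+1) := Qf_succ h m
  have e1 : Qf p (m+1) = p ((m:ℤ)+1) + Qf p (m+2) := by
    have hqs := Qf_succ h (m+1)
    have ec : ((m+1:ℕ):ℤ) = (m:ℤ)+1 := by push_cast; ring
    rw [ec, show m+1+1 = m+2 from by omega] at hqs
    exact hqs
  have hz := hazard h m
  nlinarith [hz, h.nn ((m:ℤ)+1), h.nn (m:ℤ), Qf_nonneg h (m+1), Qf_nonneg h (m+2), e0, e1]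

lemma chainQ (h : Hyp p) : ∀ (k m : ℕ),
    Qf p m * Qf p (m + k + 1) ≤ Qf p (m+1) * Qf p (m + k) := by
  intro k
  induction k with
  | zero => intro m; norm_num [mul_comm]
  | succ k ih =>
    intro m
    have hA := Qf_lc h m
    have hB := ih (m+1)
    have e1 : m + 1 + k + 1 = m + k + 2 := by ring
    have e2 : m + 1 + 1 = m + 2 := by ring
    have e3 : m + 1 + k = m + k + 1 := by ring
    rw [e1, e2, e3] at hB
    have e4 : m + (k+1) + 1 = m + k + 2 := by ring
    have e5 : m + (k+1) = m + k + 1 := by ring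
    rw [e4, e5]
    by_cases hz1 : Qf p (m+1) = 0
    · have hz3 : Qf p (m+k+2) = 0 := by
        have hle : Qf p (m+k+2) ≤ Qf p (m+1) := Qf_anti h (by omega)
        have := Qf_nonneg h (m+k+2)
        linarith [hle, hz1.le]
      rw [hz3, hz1, zero_mul, mul_zero]
    · by_cases hz2 : Qf p (m+2) = 0
      · have hz3 : Qf p (m+k+2) = 0 := by
          have hle : Qf p (m+k+2) ≤ Qf p (m+2) := Qf_anti h (by omega)
          have := Qf_nonneg h (m+k+2)
          linarith [hle, hz2.le]
        rw [hz3, mul_zero]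
        exact mul_nonneg (Qf_nonneg h _) (Qf_nonneg h _)
      · have pos1 : 0 < Qf p (m+1) := lt_of_le_of_ne (Qf_nonneg h _) (Ne.symm hz1)
        have pos2 : 0 < Qf p (m+2) := lt_of_le_of_ne (Qf_nonneg h _) (Ne.symm hz2)
        have f1 : Qf p m * Qf p (m+2) * Qf p (m+k+2) ≤ Qf p (m+1)^2 * Qf p (m+k+2) :=
          mul_le_mul_of_nonneg_right hA (Qf_nonneg h _)
        have f2 : Qf p (m+1) * (Qf p (m+1) * Qf p (m+k+2))
            ≤ Qf p (m+1) * (Qf p (m+2) * Qf p (m+k+1)) :=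
          mul_le_mul_of_nonneg_left hB pos1.le
        have f3 : Qf p m * Qf p (m+k+2) * Qf p (m+2)
            ≤ Qf p (m+1) * Qf p (m+k+1) * Qf p (m+2) := by
          nlinarith [f1, f2]
        exact le_of_mul_le_mul_right f3 pos2

lemma submult_aux (h : Hyp p) : ∀ (a : ℕ), ∀ b, a ≤ b → Qf p (a+b) ≤ Qf p a * Qf p b := by
  intro a
  induction a with
  | zero => intro b _; rw [Qf_zero h]; norm_num
  | succ a ih =>
    intro b hab
    have step1 : (a+1)+b = a + (b+1) := by ring
    rw [step1]
    calc Qf p (a + (b+1)) ≤ Qf p a * Qf p (b+1) := ih (b+1) (by omega)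
      _ ≤ Qf p (a+1) * Qf p b := by
          have hc := chainQ h (b - a) a
          have e1 : a + (b-a) + 1 = b + 1 := by omega
          have e2 : a + (b-a) = b := by omega
          rw [e1, e2] at hc
          exact hc

lemma submult (h : Hyp p) (a b : ℕ) : Qf p (a+b) ≤ Qf p a * Qf p b := by
  rcases le_total a b with hab | hba
  · exact submult_aux h a b hab
  · rw [add_comm, mul_comm]
    exact submult_aux h b a hba

lemma Qpow (h : Hyp p) (t : ℕ) : ∀ k : ℕ, Qf p (k*t) ≤ Qf p t ^ k := by
  intro k
  induction k with
  | zero => simp [Qf_zero h]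
  | succ k ih =>
    have e : (k+1)*t = k*t + t := by ring
    rw [e, pow_succ]
    calc Qf p (k*t + t) ≤ Qf p (k*t) * Qf p t := submult h _ _
      _ ≤ Qf p t ^ k * Qf p t :=
          mul_le_mul_of_nonneg_right ih (Qf_nonneg h t)

lemma QgeomP (h : Hyp p) (t : ℕ) {q : ℝ} (hq0 : 0 ≤ q) (hqt : Qf p t ≤ q) (j : ℕ) :
    Qf p (j*t+1) ≤ q^j := by
  calc Qf p (j*t+1) ≤ Qf p (j*t) := Qf_anti h (by omega)
    _ ≤ Qf p t ^ j := Qpow h t j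
    _ ≤ q ^ j := pow_le_pow_left₀ (Qf_nonneg h t) hqt j

/-- Master bound. -/
lemma master (h : Hyp p) {t : ℕ} (ht : 1 ≤ t) {u : ℝ} (hu : 1 ≤ u) {q B : ℝ}
    (hq0 : 0 ≤ q)
    (hQG : ∀ j : ℕ, Qf p (j*t+1) ≤ q^j)
    (hTail : ∀ J : ℕ, ∑ j ∈ range J, (((j:ℝ)+1)^u - (j:ℝ)^u) * q^j ≤ B)
    (F : Finset ℕ) : ∑ n ∈ F, ((n:ℝ))^u * p n ≤ (t:ℝ)^u * B := by
  classical
  set d : ℕ → ℝ := fun j => (((j:ℝ))+1)^u - ((j:ℝ))^u with hd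
  have hd0 : ∀ j, 0 ≤ d j := by
    intro j
    have : ((j:ℝ))^u ≤ ((j:ℝ)+1)^u :=
      Real.rpow_le_rpow (Nat.cast_nonneg j) (by linarith) (by linarith)
    simp [hd]; linarith
  set F' := F.filter (fun n => 1 ≤ n) with hF'
  have hsub : ∑ n ∈ F, ((n:ℝ))^u * p n = ∑ n ∈ F', ((n:ℝ))^u * p n := by
    rw [hF']
    apply (Finset.sum_filter_of_ne ?_).symm
    intro n _ hne
    by_contra hn1
    have h00 : n = 0 := by omega
    subst h00
    apply hne
    have hz : ((0:ℕ):ℝ)^u = 0 := by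
      simp only [Nat.cast_zero]
      exact Real.zero_rpow (by linarith)
    rw [hz, zero_mul]
  set k : ℕ → ℕ := fun n => (n-1)/t with hk
  set K := (F'.sup k) + 1 with hK
  have hkK : ∀ n ∈ F', k n < K := by
    intro n hn
    have := Finset.le_sup (f := k) hn
    omega
  -- telescoping identity
  have hsumd : ∀ m : ℕ, ∑ j ∈ range m, d j = ((m:ℝ))^u := by
    intro m
    have htel := Finset.sum_range_sub (f := fun i : ℕ => ((i:ℝ))^u) m
    have : ∑ j ∈ range m, d j = ∑ j ∈ range m, (((j+1:ℕ):ℝ)^u - ((j:ℕ):ℝ)^u) := by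
      apply Finset.sum_congr rfl
      intro j _
      simp only [hd]
      push_cast
      ring_nf
    rw [this, htel]
    norm_num
    exact Real.zero_rpow (by linarith)
  -- step 1
  have step1 : ∀ n ∈ F', ((n:ℝ))^u ≤ (t:ℝ)^u * ∑ j ∈ range (k n + 1), d j := by
    intro n hn
    have hn1 : 1 ≤ n := (Finset.mem_filter.mp hn).2
    have hnle : n ≤ (k n + 1) * t := by
      have hdm := Nat.div_add_mod (n-1) t
      have hmlt : (n-1) % t < t := Nat.mod_lt _ (by omega)
      have hkt : (k n + 1) * t = t * ((n-1)/t) + t := by simp only [hk]; ring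
      omega
    have h1 : ((n:ℝ))^u ≤ (((k n + 1) * t : ℕ):ℝ)^u :=
      Real.rpow_le_rpow (Nat.cast_nonneg n) (by exact_mod_cast hnle) (by linarith)
    have h2 : (((k n + 1) * t : ℕ):ℝ)^u = ((k n + 1:ℕ):ℝ)^u * ((t:ℕ):ℝ)^u := by
      push_cast
      rw [← Real.mul_rpow (by positivity) (by positivity)]
    rw [hsumd (k n + 1)]
    calc ((n:ℝ))^u ≤ (((k n + 1) * t : ℕ):ℝ)^u := h1
      _ = ((t:ℕ):ℝ)^u * ((k n + 1:ℕ):ℝ)^u := by rw [h2]; ring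
  -- reduce to double sum
  have step2 : ∑ n ∈ F', ((n:ℝ))^u * p n
      ≤ (t:ℝ)^u * ∑ n ∈ F', (∑ j ∈ range (k n + 1), d j) * p n := by
    rw [Finset.mul_sum]
    apply Finset.sum_le_sum
    intro n hn
    have := step1 n hn
    calc ((n:ℝ))^u * p n ≤ ((t:ℝ)^u * ∑ j ∈ range (k n + 1), d j) * p n :=
          mul_le_mul_of_nonneg_right this (h.nn _)
      _ = (t:ℝ)^u * ((∑ j ∈ range (k n + 1), d j) * p n) := by ring
  -- rewrite, swap
  have step3 : ∀ n ∈ F', (∑ j ∈ range (k n + 1), d j) * p n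
      = ∑ j ∈ range K, (if j ≤ k n then d j * p ((n:ℕ):ℤ) else 0) := by
    intro n hn
    rw [Finset.sum_mul]
    rw [← Finset.sum_subset (Finset.range_subset_range.mpr (Nat.succ_le_of_lt (hkK n hn)))
      (fun j _ hj => if_neg (by
        intro hcon
        apply hj
        rw [Finset.mem_range]
        omega))]
    apply Finset.sum_congr rfl
    intro j hj
    rw [if_pos (by have := Finset.mem_range.mp hj; omega)]
  have step4 : ∑ n ∈ F', (∑ j ∈ range (k n + 1), d j) * p n
      = ∑ j ∈ range K, ∑ n ∈ F', (if j ≤ k n then d j * p ((n:ℕ):ℤ) else 0) := by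
    rw [Finset.sum_congr rfl step3]
    exact Finset.sum_comm
  -- step5
  have step5 : ∀ j : ℕ, ∑ n ∈ F', (if j ≤ k n then d j * p ((n:ℕ):ℤ) else 0)
      ≤ d j * q^j := by
    intro j
    rw [Finset.sum_ite, Finset.sum_const_zero, add_zero]
    have : ∑ n ∈ F'.filter (fun n => j ≤ k n), d j * p ((n:ℕ):ℤ)
        = d j * ∑ n ∈ F'.filter (fun n => j ≤ k n), p ((n:ℕ):ℤ) := by
      rw [Finset.mul_sum]
    rw [this]
    have hQle : ∑ n ∈ F'.filter (fun n => j ≤ k n), p ((n:ℕ):ℤ) ≤ Qf p (j*t+1) := by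
      apply sum_finset_le_Qf h
      intro n hn
      have hn' := Finset.mem_filter.mp hn
      have hn1 : 1 ≤ n := (Finset.mem_filter.mp hn'.1).2
      have hjk : j ≤ (n-1)/t := hn'.2
      have h1 : j * t ≤ ((n-1)/t) * t := Nat.mul_le_mul_right t hjk
      have h2 : ((n-1)/t) * t ≤ n - 1 := Nat.div_mul_le_self _ _
      omega
    calc d j * ∑ n ∈ F'.filter (fun n => j ≤ k n), p ((n:ℕ):ℤ)
        ≤ d j * Qf p (j*t+1) := mul_le_mul_of_nonneg_left hQle (hd0 j)
      _ ≤ d j * q^j := mul_le_mul_of_nonneg_left (hQG j) (hd0 j)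
  -- conclude
  have step6 : ∑ j ∈ range K, ∑ n ∈ F', (if j ≤ k n then d j * p ((n:ℕ):ℤ) else 0)
      ≤ ∑ j ∈ range K, d j * q^j :=
    Finset.sum_le_sum (fun j _ => step5 j)
  have hfinal := hTail K
  have htu : (0:ℝ) ≤ (t:ℝ)^u := Real.rpow_nonneg (Nat.cast_nonneg t) u
  calc ∑ n ∈ F, ((n:ℝ))^u * p n = ∑ n ∈ F', ((n:ℝ))^u * p n := hsub
    _ ≤ (t:ℝ)^u * ∑ n ∈ F', (∑ j ∈ range (k n + 1), d j) * p n := step2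
    _ = (t:ℝ)^u * ∑ j ∈ range K, ∑ n ∈ F', (if j ≤ k n then d j * p ((n:ℕ):ℤ) else 0) := by
        rw [step4]
    _ ≤ (t:ℝ)^u * ∑ j ∈ range K, d j * q^j := mul_le_mul_of_nonneg_left step6 htu
    _ ≤ (t:ℝ)^u * B := mul_le_mul_of_nonneg_left (hTail K) htu

lemma Qf_split (h : Hyp p) : ∀ m : ℕ, Qf p 0 = (∑ i ∈ range m, p i) + Qf p m := by
  intro m
  induction m with
  | zero => simp
  | succ m ih =>
    rw [ih, Qf_succ h m, Finset.sum_range_succ]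
    ring

lemma exists_pos (h : Hyp p) : ∃ n₀ : ℕ, 0 < p n₀ := by
  by_contra hno
  push_neg at hno
  have hz : ∀ n : ℕ, p (((0:ℕ):ℤ) + (n:ℤ)) = 0 := by
    intro n
    have h0 : p (n:ℤ) = 0 := le_antisymm (hno n) (h.nn _)
    rw [Nat.cast_zero, zero_add]; exact h0
  have : Qf p 0 = 0 := by
    rw [Qf]
    rw [tsum_congr hz]
    exact tsum_zero
  rw [Qf_zero h] at this
  norm_num at this

/-- summability of all `u`-moments, `u ≥ 1`. -/
lemma moment_summable (h : Hyp p) {u : ℝ} (hu : 1 ≤ u) :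
    Summable (fun n : ℕ => ((n:ℝ))^u * p n) := by
  obtain ⟨n₀, hn₀⟩ := exists_pos h
  set t₀ := n₀ + 1 with ht₀
  have ht₀1 : 1 ≤ t₀ := by omega
  set q₀ := Qf p t₀ with hq₀
  have hq₀0 : 0 ≤ q₀ := Qf_nonneg h t₀
  have hq₀1 : q₀ < 1 := by
    have hsplit := Qf_split h t₀
    have hone := Qf_zero h
    have hsum_ge : p (n₀:ℤ) ≤ ∑ i ∈ range t₀, p i := by
      apply Finset.single_le_sum (f := fun i : ℕ => p (i:ℤ)) (fun i _ => h.nn _)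
      rw [Finset.mem_range]; omega
    rw [hone] at hsplit
    rw [hq₀]
    linarith
  have hQG : ∀ j : ℕ, Qf p (j*t₀+1) ≤ q₀^j := QgeomP h t₀ hq₀0 le_rfl
  -- tail bound
  obtain ⟨B, hB⟩ : ∃ B : ℝ, ∀ J : ℕ,
      ∑ j ∈ range J, (((j:ℝ)+1)^u - (j:ℝ)^u) * q₀^j ≤ B := by
    rcases eq_or_lt_of_le hq₀0 with hq0 | hq0
    · refine ⟨1 + 0 * ((0:ℝ)/(1-0)), tail_bound hu hq₀0 le_rfl (by norm_num) le_rfl ?_⟩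
      intro i
      rw [← hq0]
      simp
    · set w := Real.sqrt q₀ with hw
      have hw0 : 0 < w := Real.sqrt_pos.mpr hq0
      have hwsq : w^2 = q₀ := Real.sq_sqrt hq₀0
      have hw1 : w < 1 := by nlinarith
      set L := -Real.log w with hL
      have hL0 : 0 < L := by
        rw [hL]
        have := Real.log_neg hw0 hw1
        linarith
      have hexpL : Real.exp L = w⁻¹ := by
        rw [hL, Real.exp_neg, Real.exp_log hw0]
      set C₁ := ((u-1)/Real.exp 1)^(u-1) / L^(u-1) with hC₁
      have hC₁0 : 0 ≤ C₁ := by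
        apply div_nonneg (Real.rpow_nonneg (div_nonneg (by linarith) (Real.exp_pos 1).le) _)
          (Real.rpow_nonneg hL0.le _)
      set A := u * C₁ / w with hA
      have hA0 : 0 ≤ A := by
        apply div_nonneg (mul_nonneg (by linarith) hC₁0) hw0.le
      refine ⟨1 + A * (w/(1-w)), tail_bound hu hq₀0 hw0.le hw1 hA0 ?_⟩
      intro i
      -- core : (i+2)^(u-1) ≤ C₁ * w⁻¹^(i+2)
      have hy : 0 < L * ((i:ℝ)+2) := by positivity
      have haux := rpow_le_exp_aux hy (by linarith : (0:ℝ) ≤ u - 1)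
      have hsplitL : (L * ((i:ℝ)+2))^(u-1) = L^(u-1) * ((i:ℝ)+2)^(u-1) :=
        Real.mul_rpow hL0.le (by positivity)
      have hexpand : Real.exp (L * ((i:ℝ)+2)) = (w⁻¹)^(i+2) := by
        rw [show L * ((i:ℝ)+2) = ((i+2:ℕ):ℝ) * L by push_cast; ring]
        rw [Real.exp_nat_mul, hexpL]
      have hLpos : (0:ℝ) < L^(u-1) := Real.rpow_pos_of_pos hL0 _
      have hcore : ((i:ℝ)+2)^(u-1) ≤ C₁ * (w⁻¹)^(i+2) := by
        rw [hC₁, div_mul_eq_mul_div, le_div_iff₀ hLpos]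
        calc ((i:ℝ)+2)^(u-1) * L^(u-1) = (L * ((i:ℝ)+2))^(u-1) := by
              rw [hsplitL]; ring
          _ ≤ ((u-1)/Real.exp 1)^(u-1) * Real.exp (L * ((i:ℝ)+2)) := haux
          _ = ((u-1)/Real.exp 1)^(u-1) * (w⁻¹)^(i+2) := by rw [hexpand]
      -- power juggling
      have hqpow : q₀^(i+1) = w^(i+2) * w^i := by
        rw [← hwsq, ← pow_mul, ← pow_add]
        congr 1
        omega
      have hwinv : (w⁻¹)^(i+2) * (w^(i+2) * w^i) = w^i := by
        rw [inv_pow]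
        rw [← mul_assoc, inv_mul_cancel₀ (by positivity), one_mul]
      calc u * ((i:ℝ)+2)^(u-1) * q₀^(i+1)
          ≤ u * (C₁ * (w⁻¹)^(i+2)) * q₀^(i+1) := by
            apply mul_le_mul_of_nonneg_right
              (mul_le_mul_of_nonneg_left hcore (by linarith)) (pow_nonneg hq₀0 _)
        _ = u * C₁ * ((w⁻¹)^(i+2) * (w^(i+2) * w^i)) := by rw [hqpow]; ring
        _ = u * C₁ * w^i := by rw [hwinv]
        _ = A * w^(i+1) := by
            rw [hA, pow_succ']
            field_simp
  -- conclude summability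
  apply summable_of_sum_le (c := (t₀:ℝ)^u * B)
  · intro n
    exact mul_nonneg (Real.rpow_nonneg (Nat.cast_nonneg n) u) (h.nn _)
  · intro F
    exact master h ht₀1 hu hq₀0 hQG hB F

/-- Markov. -/
lemma markov (h : Hyp p) {u : ℝ} (hu : 1 ≤ u) (t : ℕ) (ht : 1 ≤ t) :
    (t:ℝ)^u * Qf p t ≤ ∑' n : ℕ, ((n:ℝ))^u * p n := by
  have hgsum := moment_summable h hu
  rw [Qf, ← tsum_mul_left]
  have hcomp : Summable (fun m : ℕ => ((t+m:ℕ):ℝ)^u * p ((t+m:ℕ):ℤ)) := by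
    have : (fun m : ℕ => ((t+m:ℕ):ℝ)^u * p ((t+m:ℕ):ℤ))
        = (fun n : ℕ => ((n:ℝ))^u * p n) ∘ (fun m => t + m) := rfl
    rw [this]
    exact hgsum.comp_injective (fun a b hab => by omega)
  have step1 : ∑' m : ℕ, (t:ℝ)^u * p ((t:ℤ) + m)
      ≤ ∑' m : ℕ, ((t+m:ℕ):ℝ)^u * p ((t+m:ℕ):ℤ) := by
    apply Summable.tsum_le_tsum ?_ ((h.sumshift t).mul_left _) hcomp
    intro m
    have e1 : ((t+m:ℕ):ℤ) = (t:ℤ) + m := by push_cast; ring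
    rw [e1]
    apply mul_le_mul_of_nonneg_right ?_ (h.nn _)
    apply Real.rpow_le_rpow (Nat.cast_nonneg t) ?_ (by linarith)
    push_cast; linarith [Nat.cast_nonneg (α := ℝ) m]
  have step2 : ∑' m : ℕ, ((t+m:ℕ):ℝ)^u * p ((t+m:ℕ):ℤ)
      ≤ ∑' n : ℕ, ((n:ℝ))^u * p n := by
    apply Summable.tsum_le_tsum_of_inj (fun m => t + m) (add_right_injective t)
      (fun c _ => mul_nonneg (Real.rpow_nonneg (Nat.cast_nonneg c) u) (h.nn _))
      (fun m => le_rfl) hcomp hgsum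
  exact le_trans step1 step2

lemma zsum_eq (h : Hyp p) (g : ℤ → ℝ) (hg : ∀ n : ℤ, p n = 0 → g n = 0) :
    ∑' n : ℤ, g n = ∑' n : ℕ, g n := by
  symm
  apply Function.Injective.tsum_eq (fun a b hab => by exact_mod_cast hab)
  intro z hz
  rcases le_or_gt 0 z with hz0 | hz0
  · exact ⟨z.toNat, by simp [Int.toNat_of_nonneg hz0]⟩
  · exact absurd (hg z (h.neg z hz0)) hz

end RevJensenAux

open RevJensenAux Finset

/-- Reverse Jensen inequality for discrete log-concave random variables supported on
`ℕ`: for all `1 ≤ r ≤ s`,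
`E[X^s]^{1/s} ≤ 5·s·(s·e)^{1/s}·(E[X^r]^{1/r} + 1)/2`; in particular, if `E[X] ≥ 1`,
then `E[X^s]^{1/s} ≤ 5·s·(s·e)^{1/s}·E[X^r]^{1/r}`. -/
theorem reverse_jensen (p : ℤ → ℝ) (hp : IsLogConcavePMF p)
    (hsupp : ∀ n : ℤ, 0 < p n → 0 ≤ n)
    (r s : ℝ) (hr : 1 ≤ r) (hrs : r ≤ s) :
    (∑' n : ℤ, (n : ℝ) ^ s * p n) ^ (1 / s) ≤
      5 * s * (s * Real.exp 1) ^ (1 / s) *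
        (((∑' n : ℤ, (n : ℝ) ^ r * p n) ^ (1 / r) + 1) / 2) ∧
    (1 ≤ ∑' n : ℤ, (n : ℝ) * p n →
      (∑' n : ℤ, (n : ℝ) ^ s * p n) ^ (1 / s) ≤
        5 * s * (s * Real.exp 1) ^ (1 / s) *
          (∑' n : ℤ, (n : ℝ) ^ r * p n) ^ (1 / r)) := by
  obtain ⟨hnn, hsum, htot, hlc, hcon⟩ := hp
  have h : Hyp p := ⟨hnn, hsum, htot, hlc, hcon, fun n hn => by
    by_contra hne
    have : 0 < p n := lt_of_le_of_ne (hnn n) (Ne.symm hne)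
    exact absurd (hsupp n this) (by omega)⟩
  have hs1 : 1 ≤ s := le_trans hr hrs
  have hs0 : 0 < s := by linarith
  have hr0 : 0 < r := by linarith
  -- convert ℤ-sums to ℕ-sums
  have convs : (∑' n : ℤ, (n : ℝ) ^ s * p n) = ∑' n : ℕ, ((n:ℝ)) ^ s * p n := by
    rw [zsum_eq h _ (fun n hn => by rw [hn, mul_zero])]
    apply tsum_congr; intro n; norm_num
  have convr : (∑' n : ℤ, (n : ℝ) ^ r * p n) = ∑' n : ℕ, ((n:ℝ)) ^ r * p n := by
    rw [zsum_eq h _ (fun n hn => by rw [hn, mul_zero])]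
    apply tsum_congr; intro n; norm_num
  have conv1 : (∑' n : ℤ, (n : ℝ) * p n) = ∑' n : ℕ, ((n:ℝ)) * p n := by
    rw [zsum_eq h _ (fun n hn => by rw [hn, mul_zero])]
    apply tsum_congr; intro n; norm_num
  rw [convs, convr, conv1]
  set Er := ∑' n : ℕ, ((n:ℝ)) ^ r * p n with hEr
  set Es := ∑' n : ℕ, ((n:ℝ)) ^ s * p n with hEs
  have hsumr : Summable (fun n : ℕ => ((n:ℝ))^r * p n) := moment_summable h hr
  have hEr0 : 0 ≤ Er := tsum_nonneg (fun n =>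
    mul_nonneg (Real.rpow_nonneg (Nat.cast_nonneg n) r) (h.nn _))
  have hEs0 : 0 ≤ Es := tsum_nonneg (fun n =>
    mul_nonneg (Real.rpow_nonneg (Nat.cast_nonneg n) s) (h.nn _))
  set μ := Er ^ (1/r) with hμ
  have hμ0 : 0 ≤ μ := Real.rpow_nonneg hEr0 _
  set t : ℕ := ⌊3*μ⌋₊ + 1 with htdef
  have ht1 : 1 ≤ t := by omega
  have htgt : 3*μ < (t:ℝ) := by
    rw [htdef]
    push_cast
    exact Nat.lt_floor_add_one (3*μ)
  have htle : (t:ℝ) ≤ 3*μ + 1 := by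
    rw [htdef]
    push_cast
    have := Nat.floor_le (by positivity : (0:ℝ) ≤ 3*μ)
    linarith
  have htpos : (0:ℝ) < t := by
    have : (1:ℝ) ≤ t := by exact_mod_cast ht1
    linarith
  -- Q t ≤ 1/3
  have hQt : Qf p t ≤ 1/3 := by
    have hmk := markov h hr t ht1
    have htr : (0:ℝ) < (t:ℝ)^r := Real.rpow_pos_of_pos htpos r
    have hμr : μ ^ r = Er := by
      rw [hμ, one_div, Real.rpow_inv_rpow hEr0 (ne_of_gt hr0)]
    have hkey : 3 * Er ≤ (t:ℝ)^r := by
      have hμt3 : μ ≤ (t:ℝ)/3 := by linarith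
      have h1 : μ ^ r ≤ ((t:ℝ)/3) ^ r := Real.rpow_le_rpow hμ0 hμt3 hr0.le
      have h2 : (t:ℝ)^r = 3^r * ((t:ℝ)/3)^r := by
        rw [← Real.mul_rpow (by norm_num) (by positivity)]
        congr 1
        ring
      have h3 : (3:ℝ) ≤ 3^r := by
        calc (3:ℝ) = 3^(1:ℝ) := (Real.rpow_one 3).symm
          _ ≤ 3^r := Real.rpow_le_rpow_of_exponent_le (by norm_num) hr
      have h4 : (0:ℝ) ≤ ((t:ℝ)/3)^r := Real.rpow_nonneg (by positivity) r
      calc 3 * Er = 3 * μ^r := by rw [hμr]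
        _ ≤ 3 * ((t:ℝ)/3)^r := by linarith
        _ ≤ 3^r * ((t:ℝ)/3)^r := mul_le_mul_of_nonneg_right h3 h4
        _ = (t:ℝ)^r := h2.symm
    -- Qf p t ≤ Er / t^r ≤ 1/3
    have hq1 : Qf p t ≤ Er / (t:ℝ)^r := by
      rw [le_div_iff₀ htr]
      calc Qf p t * (t:ℝ)^r = (t:ℝ)^r * Qf p t := by ring
        _ ≤ Er := hmk
    have hq2 : Er / (t:ℝ)^r ≤ 1/3 := by
      rw [div_le_div_iff₀ htr (by norm_num)]
      linarith
    linarith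
  have hQG : ∀ j : ℕ, Qf p (j*t+1) ≤ (1/3:ℝ)^j := QgeomP h t (by norm_num) hQt
  set B := (5*s/6) ^ s * (s * Real.exp 1) with hB
  have hB0 : 0 ≤ B := by
    apply mul_nonneg (Real.rpow_nonneg (by linarith) s)
    positivity
  have hEsle : Es ≤ (t:ℝ)^s * B := by
    apply tsum_le_of_sum_le' (by positivity)
    intro F
    exact master h ht1 hs1 (by norm_num) hQG (fun J => sharp_tail hs1 J) F
  -- take s-th roots
  have hLHS : Es ^ (1/s) ≤ ((t:ℝ)^s * B) ^ (1/s) :=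
    Real.rpow_le_rpow hEs0 hEsle (by positivity)
  have heq : ((t:ℝ)^s * B) ^ (1/s) = (t:ℝ) * ((5*s/6) * (s * Real.exp 1) ^ (1/s)) := by
    rw [hB, Real.mul_rpow (Real.rpow_nonneg htpos.le s)
        (mul_nonneg (Real.rpow_nonneg (by linarith) s) (by positivity)),
      Real.mul_rpow (Real.rpow_nonneg (by linarith) s) (by positivity)]
    rw [one_div, Real.rpow_rpow_inv htpos.le (ne_of_gt hs0),
      Real.rpow_rpow_inv (by linarith) (ne_of_gt hs0)]
  have hfac0 : (0:ℝ) ≤ (5*s/6) * (s * Real.exp 1) ^ (1/s) := by positivity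
  have part1 : Es ^ (1/s) ≤ 5 * s * (s * Real.exp 1) ^ (1/s) * ((μ + 1) / 2) := by
    have h5 : (t:ℝ) * ((5*s/6) * (s * Real.exp 1) ^ (1/s))
        ≤ (3*(μ+1)) * ((5*s/6) * (s * Real.exp 1) ^ (1/s)) := by
      apply mul_le_mul_of_nonneg_right ?_ hfac0
      linarith
    have h6 : (3*(μ+1)) * ((5*s/6) * (s * Real.exp 1) ^ (1/s))
        = 5 * s * (s * Real.exp 1) ^ (1/s) * ((μ + 1) / 2) := by ring
    calc Es ^ (1/s) ≤ ((t:ℝ)^s * B) ^ (1/s) := hLHS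
      _ = (t:ℝ) * ((5*s/6) * (s * Real.exp 1) ^ (1/s)) := heq
      _ ≤ (3*(μ+1)) * ((5*s/6) * (s * Real.exp 1) ^ (1/s)) := h5
      _ = _ := h6
  constructor
  · exact part1
  · intro hE1
    by_cases hsum1 : Summable (fun n : ℕ => ((n:ℝ)) * p n)
    · have hcomp : ∀ n : ℕ, ((n:ℝ)) * p n ≤ ((n:ℝ))^r * p n := by
        intro n
        rcases Nat.eq_zero_or_pos n with h0 | h1
        · subst h0
          simp [Real.zero_rpow (ne_of_gt hr0)]
        · apply mul_le_mul_of_nonneg_right ?_ (h.nn _)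
          have hn1 : (1:ℝ) ≤ (n:ℝ) := by exact_mod_cast h1
          calc ((n:ℝ)) = ((n:ℝ))^(1:ℝ) := (Real.rpow_one _).symm
            _ ≤ ((n:ℝ))^r := Real.rpow_le_rpow_of_exponent_le hn1 hr
      have hE1r : (∑' n : ℕ, ((n:ℝ)) * p n) ≤ Er := Summable.tsum_le_tsum hcomp hsum1 hsumr
      have hEr1 : 1 ≤ Er := le_trans hE1 hE1r
      have hμ1 : 1 ≤ μ := Real.one_le_rpow hEr1 (by positivity)
      have hmono : 5 * s * (s * Real.exp 1) ^ (1/s) * ((μ + 1) / 2)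
          ≤ 5 * s * (s * Real.exp 1) ^ (1/s) * μ := by
        apply mul_le_mul_of_nonneg_left (by linarith) (by positivity)
      exact le_trans part1 hmono
    · rw [tsum_eq_zero_of_not_summable hsum1] at hE1
      linarith
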